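/- Let x ∈ ℂ with x ≠ 0. Let V be a 4-dimensional ℂ-vector space and let f be an endomorphism of V whose matrix in some basis of V is diag(J(x,2), J(x⁻¹,2)). Then there is a basis of the 6-dimensional space ⋀²V in which the induced endomorphism ⋀²f has matrix diag(J(1,3), J(1,1), J(x²,1), J(x⁻²,1)). -/

import Mathlib

/-- The `n × n` Jordan block with eigenvalue `lam`: every diagonal entry is `lam` and every
entry directly above the diagonal is `1`. -/
def jordanBlock (lam : ℂ) (n : ℕ) : Matrix (Fin n) (Fin n) ℂ :=
  Matrix.of fun i j : Fin n =>
    if (j : ℕ) = (i : ℕ) then lam else if (j : ℕ) = (i : ℕ) + 1 then 1 else 0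

/-- The wedge `v ∧ w` as an element of the second exterior power `⋀[ℂ]^2 V`. -/
def wedge {V : Type*} [AddCommGroup V] [Module ℂ V] (v w : V) : ⋀[ℂ]^2 V :=
  ⟨ExteriorAlgebra.ι ℂ v * ExteriorAlgebra.ι ℂ w, by
    show _ ∈ LinearMap.range (ExteriorAlgebra.ι ℂ (M := V)) ^ 2
    rw [pow_two]
    exact Submodule.mul_mem_mul (LinearMap.mem_range_self _ v) (LinearMap.mem_range_self _ w)⟩

section wedgelemmas
variable {V : Type*} [AddCommGroup V] [Module ℂ V]

@[simp] lemma wedge_coe (v w : V) :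
    (wedge v w : ExteriorAlgebra ℂ V) = ExteriorAlgebra.ι ℂ v * ExteriorAlgebra.ι ℂ w := rfl

lemma wedge_add_left (u v w : V) : wedge (u + v) w = wedge u w + wedge v w := by
  apply Subtype.ext; simp [add_mul]

lemma wedge_add_right (u v w : V) : wedge u (v + w) = wedge u v + wedge u w := by
  apply Subtype.ext; simp [mul_add]

lemma wedge_smul_left (a : ℂ) (v w : V) : wedge (a • v) w = a • wedge v w := by
  apply Subtype.ext; simp [smul_mul_assoc]

lemma wedge_smul_right (a : ℂ) (v w : V) : wedge v (a • w) = a • wedge v w := by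
  apply Subtype.ext; simp [mul_smul_comm]

lemma wedge_self (v : V) : wedge v v = 0 := by
  apply Subtype.ext; simp [ExteriorAlgebra.ι_sq_zero]

lemma wedge_anticomm (v w : V) : wedge w v = - wedge v w := by
  have h := wedge_self (v + w)
  rw [wedge_add_left, wedge_add_right, wedge_add_right, wedge_self, wedge_self] at h
  rw [zero_add, add_zero] at h
  exact eq_neg_of_add_eq_zero_left (by rw [add_comm]; exact h)
end wedgelemmas

section dual
variable {V : Type*} [AddCommGroup V] [Module ℂ V]

/-- The alternating 2-form `(v, w) ↦ a v * b w - a w * b v`. -/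
noncomputable def altForm (a b : V →ₗ[ℂ] ℂ) : V [⋀^Fin 2]→ₗ[ℂ] ℂ :=
  MultilinearMap.alternatization
    ((MultilinearMap.mkPiAlgebra ℂ (Fin 2) ℂ).compLinearMap ![a, b])

lemma univ_perm_fin_two :
    (Finset.univ : Finset (Equiv.Perm (Fin 2))) = {1, Equiv.swap 0 1} := by decide

lemma altForm_apply (a b : V →ₗ[ℂ] ℂ) (v w : V) :
    altForm a b ![v, w] = a v * b w - a w * b v := by
  rw [altForm, MultilinearMap.alternatization_apply, univ_perm_fin_two,
    Finset.sum_insert (by decide), Finset.sum_singleton]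
  simp only [MultilinearMap.domDomCongr_apply, MultilinearMap.compLinearMap_apply,
    MultilinearMap.mkPiAlgebra_apply, Fin.prod_univ_two]
  norm_num [Equiv.Perm.sign_swap, Equiv.swap_apply_left, Equiv.swap_apply_right, sub_eq_add_neg]

/-- Linear functional on `⋀²V` induced by an alternating 2-form. -/
noncomputable def extDual (a b : V →ₗ[ℂ] ℂ) : (⋀[ℂ]^2 V) →ₗ[ℂ] ℂ :=
  (ExteriorAlgebra.liftAlternating
      (fun n => match n with | 2 => altForm a b | _ => 0)) ∘ₗ (Submodule.subtype _)

lemma extDual_wedge (a b : V →ₗ[ℂ] ℂ) (v w : V) :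
    extDual a b (wedge v w) = a v * b w - a w * b v := by
  have : extDual a b (wedge v w)
      = ExteriorAlgebra.liftAlternating
          (fun n => match n with | 2 => altForm a b | _ => 0)
          (ExteriorAlgebra.ι ℂ v * ExteriorAlgebra.ι ℂ w) := rfl
  rw [this, ExteriorAlgebra.liftAlternating_ι_mul, ExteriorAlgebra.liftAlternating_ι]
  exact altForm_apply a b v w
end dual

section basisW
variable {V : Type*} [AddCommGroup V] [Module ℂ V] (B : Module.Basis (Fin 2 ⊕ Fin 2) ℂ V)

/-- Index type for the basis of `⋀²V`. -/
abbrev σ6 := Fin 3 ⊕ (Fin 1 ⊕ (Fin 1 ⊕ Fin 1))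

/-- The six basis wedges of `⋀²V`. -/
noncomputable def wvec : σ6 → ⋀[ℂ]^2 V :=
  Sum.elim
    ![wedge (B (.inl 0)) (B (.inr 0)), wedge (B (.inl 0)) (B (.inr 1)),
      wedge (B (.inl 1)) (B (.inr 0))]
    (Sum.elim ![wedge (B (.inl 1)) (B (.inr 1))]
      (Sum.elim ![wedge (B (.inl 0)) (B (.inl 1))] ![wedge (B (.inr 0)) (B (.inr 1))]))

/-- The dual functionals. -/
noncomputable def pvec : σ6 → ((⋀[ℂ]^2 V) →ₗ[ℂ] ℂ) :=
  Sum.elim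
    ![extDual (B.coord (.inl 0)) (B.coord (.inr 0)),
      extDual (B.coord (.inl 0)) (B.coord (.inr 1)),
      extDual (B.coord (.inl 1)) (B.coord (.inr 0))]
    (Sum.elim ![extDual (B.coord (.inl 1)) (B.coord (.inr 1))]
      (Sum.elim ![extDual (B.coord (.inl 0)) (B.coord (.inl 1))]
        ![extDual (B.coord (.inr 0)) (B.coord (.inr 1))]))

lemma coord_basis (i j : Fin 2 ⊕ Fin 2) : B.coord i (B j) = if j = i then 1 else 0 := by
  simp [Module.Basis.coord_apply, Module.Basis.repr_self, Finsupp.single_apply]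

lemma pvec_wvec (s t : σ6) : pvec B s (wvec B t) = if s = t then 1 else 0 := by
  rcases s with s | s | s <;> rcases t with t | t | t <;> fin_cases s <;> fin_cases t <;>
    simp [pvec, wvec, extDual_wedge, coord_basis]

lemma wvec_li : LinearIndependent ℂ (wvec B) := by
  rw [Fintype.linearIndependent_iff]
  intro c hc t
  have h := congrArg (pvec B t) hc
  rw [map_sum, map_zero] at h
  simp only [map_smul, pvec_wvec, smul_eq_mul] at h
  simpa [Finset.sum_ite_eq] using h

lemma wvec_span : ⊤ ≤ Submodule.span ℂ (Set.range (wvec B)) := by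
  set W : Submodule ℂ (ExteriorAlgebra ℂ V) := ⋀[ℂ]^2 V
  set P : Submodule ℂ (ExteriorAlgebra ℂ V) :=
    Submodule.span ℂ (W.subtype '' Set.range (wvec B)) with hP
  have hspanV : ∀ u : V, u ∈ Submodule.span ℂ (Set.range B) := by
    intro u; rw [B.span_eq]; trivial
  have wvec_mem : ∀ s : σ6, ((wvec B s : ExteriorAlgebra ℂ V)) ∈ P :=
    fun s => Submodule.subset_span ⟨wvec B s, ⟨s, rfl⟩, rfl⟩
  have basisPair : ∀ i j : Fin 2 ⊕ Fin 2,
      ExteriorAlgebra.ι ℂ (B i) * ExteriorAlgebra.ι ℂ (B j) ∈ P := by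
    have hswap : ∀ v w : V, ExteriorAlgebra.ι ℂ v * ExteriorAlgebra.ι ℂ w ∈ P →
        ExteriorAlgebra.ι ℂ w * ExteriorAlgebra.ι ℂ v ∈ P := by
      intro v w h
      have : ExteriorAlgebra.ι ℂ w * ExteriorAlgebra.ι ℂ v
          = -(ExteriorAlgebra.ι ℂ v * ExteriorAlgebra.ι ℂ w) :=
        eq_neg_of_add_eq_zero_left (ExteriorAlgebra.ι_add_mul_swap w v)
      rw [this]; exact neg_mem h
    intro i j
    rcases i with i | i <;> rcases j with j | j <;> fin_cases i <;> fin_cases j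
    · simpa using zero_mem P
    · exact wvec_mem (.inr (.inr (.inl 0)))
    · exact hswap _ _ (wvec_mem (.inr (.inr (.inl 0))))
    · simpa using zero_mem P
    · exact wvec_mem (.inl 0)
    · exact wvec_mem (.inl 1)
    · exact wvec_mem (.inl 2)
    · exact wvec_mem (.inr (.inl 0))
    · exact hswap _ _ (wvec_mem (.inl 0))
    · exact hswap _ _ (wvec_mem (.inl 2))
    · exact hswap _ _ (wvec_mem (.inl 1))
    · exact hswap _ _ (wvec_mem (.inr (.inl 0)))
    · simpa using zero_mem P
    · exact wvec_mem (.inr (.inr (.inr 0)))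
    · exact hswap _ _ (wvec_mem (.inr (.inr (.inr 0))))
    · simpa using zero_mem P
  have stepA : ∀ i : Fin 2 ⊕ Fin 2, ∀ w : V,
      ExteriorAlgebra.ι ℂ (B i) * ExteriorAlgebra.ι ℂ w ∈ P := by
    intro i w
    induction hspanV w using Submodule.span_induction with
    | mem y hy => obtain ⟨j, rfl⟩ := hy; exact basisPair i j
    | zero => simpa using zero_mem P
    | add y z _ _ hy hz => rw [map_add, mul_add]; exact add_mem hy hz
    | smul a y _ hy => rw [map_smul, mul_smul_comm]; exact Submodule.smul_mem _ a hy
  have stepB : ∀ u w : V, ExteriorAlgebra.ι ℂ u * ExteriorAlgebra.ι ℂ w ∈ P := by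
    intro u w
    induction hspanV u using Submodule.span_induction with
    | mem y hy => obtain ⟨j, rfl⟩ := hy; exact stepA j w
    | zero => simpa using zero_mem P
    | add y z _ _ hy hz => rw [map_add, add_mul]; exact add_mem hy hz
    | smul a y _ hy => rw [map_smul, smul_mul_assoc]; exact Submodule.smul_mem _ a hy
  have hWP : W ≤ P := by
    rw [show W = ⋀[ℂ]^2 V from rfl, ← ExteriorAlgebra.ιMulti_span_fixedDegree,
      Submodule.span_le]
    rintro _ ⟨v, rfl⟩
    have : ExteriorAlgebra.ιMulti ℂ 2 v
        = ExteriorAlgebra.ι ℂ (v 0) * ExteriorAlgebra.ι ℂ (v 1) := by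
      simp [ExteriorAlgebra.ιMulti_apply, List.ofFn_succ, Matrix.vecTail]
    rw [this]
    exact stepB _ _
  intro z _
  have hz : (z : ExteriorAlgebra ℂ V) ∈ P := hWP z.2
  rw [hP, ← Submodule.map_span] at hz
  obtain ⟨y, hy, hyz⟩ := Submodule.mem_map.mp hz
  rwa [show y = z from Subtype.ext hyz] at hy

/-- The basis of the six wedges. -/
noncomputable def wbasis : Module.Basis (σ6) ℂ (⋀[ℂ]^2 V) := Module.Basis.mk (wvec_li B) (wvec_span B)

@[simp] lemma wbasis_apply (s : σ6) : wbasis B s = wvec B s := Module.Basis.mk_apply _ _ _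

end basisW

set_option maxHeartbeats 2000000 in
/-- Let `x ∈ ℂ` with `x ≠ 0`. If the matrix of the endomorphism `f` of the 4-dimensional ℂ-vector space `V` in some basis is diag(J(x,2), J(x⁻¹,2)), then in some basis of the 6-dimensional space ⋀²V the induced endomorphism ⋀²f (characterized by `v ∧ w ↦ f v ∧ f w`) has matrix diag(J(1,3), J(1,1), J(x²,1), J(x⁻²,1)). -/
theorem exterior_square_jordan_Jx2_Jxm1 (V : Type*) [AddCommGroup V] [Module ℂ V]
    (hdim : Module.finrank ℂ V = 4)
    (x : ℂ) (hx : x ≠ 0)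
    (f : V →ₗ[ℂ] V)
    (B : Module.Basis (Fin 2 ⊕ Fin 2) ℂ V)
    (hB : LinearMap.toMatrix B B f = Matrix.fromBlocks (jordanBlock x 2) 0 0 (jordanBlock x⁻¹ 2))
    (g : (⋀[ℂ]^2 V) →ₗ[ℂ] (⋀[ℂ]^2 V))
    (hg : ∀ v w : V, g (wedge v w) = wedge (f v) (f w)) :
    ∃ C : Module.Basis (Fin 3 ⊕ (Fin 1 ⊕ (Fin 1 ⊕ Fin 1))) ℂ (⋀[ℂ]^2 V),
      LinearMap.toMatrix C C g = Matrix.fromBlocks (jordanBlock 1 3) 0 0 (Matrix.fromBlocks (jordanBlock 1 1) 0 0 (Matrix.fromBlocks (jordanBlock (x ^ 2) 1) 0 0 (jordanBlock (x ^ 2)⁻¹ 1))) := by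
  have hM : ∀ j, f (B j) = ∑ i,
      (Matrix.fromBlocks (jordanBlock x 2) 0 0 (jordanBlock x⁻¹ 2)) i j • B i := by
    intro j
    conv_lhs => rw [← Matrix.toLin_toMatrix B B f, hB]
    rw [Matrix.toLin_self]
  have hf1 : f (B (Sum.inl 0)) = x • B (Sum.inl 0) := by
    rw [hM]; simp [Fintype.sum_sum_type, Fin.sum_univ_two, jordanBlock]
  have hf2 : f (B (Sum.inl 1)) = B (Sum.inl 0) + x • B (Sum.inl 1) := by
    rw [hM]; simp [Fintype.sum_sum_type, Fin.sum_univ_two, jordanBlock]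
  have hf3 : f (B (Sum.inr 0)) = x⁻¹ • B (Sum.inr 0) := by
    rw [hM]; simp [Fintype.sum_sum_type, Fin.sum_univ_two, jordanBlock]
  have hf4 : f (B (Sum.inr 1)) = B (Sum.inr 0) + x⁻¹ • B (Sum.inr 1) := by
    rw [hM]; simp [Fintype.sum_sum_type, Fin.sum_univ_two, jordanBlock]
  set e1 := B (Sum.inl 0) with he1
  set e2 := B (Sum.inl 1) with he2
  set e3 := B (Sum.inr 0) with he3
  set e4 := B (Sum.inr 1) with he4
  have hx1 : x * x⁻¹ = 1 := mul_inv_cancel₀ hx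
  have gw13 : g (wedge e1 e3) = wedge e1 e3 := by
    rw [hg, hf1, hf3]
    simp only [wedge_add_left, wedge_add_right, wedge_smul_left, wedge_smul_right,
      wedge_self, smul_zero, zero_add, add_zero, smul_smul, smul_add]
    match_scalars <;> field_simp
  have gw14 : g (wedge e1 e4) = x • wedge e1 e3 + wedge e1 e4 := by
    rw [hg, hf1, hf4]
    simp only [wedge_add_left, wedge_add_right, wedge_smul_left, wedge_smul_right,
      wedge_self, smul_zero, zero_add, add_zero, smul_smul, smul_add]
    match_scalars <;> field_simp
  have gw23 : g (wedge e2 e3) = x⁻¹ • wedge e1 e3 + wedge e2 e3 := by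
    rw [hg, hf2, hf3]
    simp only [wedge_add_left, wedge_add_right, wedge_smul_left, wedge_smul_right,
      wedge_self, smul_zero, zero_add, add_zero, smul_smul, smul_add]
    match_scalars <;> field_simp
  have gw24 : g (wedge e2 e4) =
      wedge e1 e3 + x⁻¹ • wedge e1 e4 + x • wedge e2 e3 + wedge e2 e4 := by
    rw [hg, hf2, hf4]
    simp only [wedge_add_left, wedge_add_right, wedge_smul_left, wedge_smul_right,
      wedge_self, smul_zero, zero_add, add_zero, smul_smul, smul_add]
    match_scalars <;> field_simp
  have gw12 : g (wedge e1 e2) = (x ^ 2) • wedge e1 e2 := by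
    rw [hg, hf1, hf2]
    simp only [wedge_add_left, wedge_add_right, wedge_smul_left, wedge_smul_right,
      wedge_self, smul_zero, zero_add, add_zero, smul_smul, smul_add]
    try match_scalars <;> field_simp <;> ring
  have gw34 : g (wedge e3 e4) = (x ^ 2)⁻¹ • wedge e3 e4 := by
    rw [hg, hf3, hf4]
    simp only [wedge_add_left, wedge_add_right, wedge_smul_left, wedge_smul_right,
      wedge_self, smul_zero, zero_add, add_zero, smul_smul, smul_add]
    try match_scalars <;> field_simp <;> ring
  set bW := wbasis B with hbWdef
  have hb0 : bW (Sum.inl 0) = wedge e1 e3 := by rw [wbasis_apply]; rfl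
  have hb1 : bW (Sum.inl 1) = wedge e1 e4 := by rw [wbasis_apply]; rfl
  have hb2 : bW (Sum.inl 2) = wedge e2 e3 := by rw [wbasis_apply]; rfl
  have hb3 : bW (Sum.inr (Sum.inl 0)) = wedge e2 e4 := by rw [wbasis_apply]; rfl
  have hb4 : bW (Sum.inr (Sum.inr (Sum.inl 0))) = wedge e1 e2 := by rw [wbasis_apply]; rfl
  have hb5 : bW (Sum.inr (Sum.inr (Sum.inr 0))) = wedge e3 e4 := by rw [wbasis_apply]; rfl
  set cvec : σ6 → ⋀[ℂ]^2 V :=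
    Sum.elim
      ![(2:ℂ) • bW (Sum.inl 0),
        bW (Sum.inl 0) + x⁻¹ • bW (Sum.inl 1) + x • bW (Sum.inl 2),
        bW (Sum.inr (Sum.inl 0))]
      (Sum.elim ![bW (Sum.inl 1) - (x^2) • bW (Sum.inl 2)]
        (Sum.elim ![bW (Sum.inr (Sum.inr (Sum.inl 0)))]
          ![bW (Sum.inr (Sum.inr (Sum.inr 0)))])) with hcvec
  set dvec : σ6 → ⋀[ℂ]^2 V :=
    Sum.elim
      ![(2:ℂ)⁻¹ • bW (Sum.inl 0),
        -(x/4) • bW (Sum.inl 0) + (x/2) • bW (Sum.inl 1)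
          + (2:ℂ)⁻¹ • bW (Sum.inr (Sum.inl 0)),
        -(4*x)⁻¹ • bW (Sum.inl 0) + (2*x)⁻¹ • bW (Sum.inl 1)
          - (2*x^2)⁻¹ • bW (Sum.inr (Sum.inl 0))]
      (Sum.elim ![bW (Sum.inl 2)]
        (Sum.elim ![bW (Sum.inr (Sum.inr (Sum.inl 0)))]
          ![bW (Sum.inr (Sum.inr (Sum.inr 0)))])) with hdvec
  set T : (⋀[ℂ]^2 V) →ₗ[ℂ] (⋀[ℂ]^2 V) := bW.constr ℂ cvec with hT
  set T' : (⋀[ℂ]^2 V) →ₗ[ℂ] (⋀[ℂ]^2 V) := bW.constr ℂ dvec with hT'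
  have k1_0 : (T ∘ₗ T') (bW (Sum.inl 0)) = bW ((Sum.inl 0)) := by
    simp only [LinearMap.comp_apply, LinearMap.id_apply, hT, hT', Module.Basis.constr_basis,
      hdvec, hcvec, Sum.elim_inl, Sum.elim_inr,
      Matrix.cons_val_zero, Matrix.cons_val_one, Matrix.head_cons, Matrix.cons_val_two,
      Matrix.tail_cons, map_add, map_sub, map_smul, map_neg]
    try match_scalars <;> field_simp <;> ring
  have k2_0 : (T' ∘ₗ T) (bW (Sum.inl 0)) = bW ((Sum.inl 0)) := by
    simp only [LinearMap.comp_apply, LinearMap.id_apply, hT, hT', Module.Basis.constr_basis,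
      hdvec, hcvec, Sum.elim_inl, Sum.elim_inr,
      Matrix.cons_val_zero, Matrix.cons_val_one, Matrix.head_cons, Matrix.cons_val_two,
      Matrix.tail_cons, map_add, map_sub, map_smul, map_neg]
    try match_scalars <;> field_simp <;> ring
  have k1_1 : (T ∘ₗ T') (bW (Sum.inl 1)) = bW ((Sum.inl 1)) := by
    simp only [LinearMap.comp_apply, LinearMap.id_apply, hT, hT', Module.Basis.constr_basis,
      hdvec, hcvec, Sum.elim_inl, Sum.elim_inr,
      Matrix.cons_val_zero, Matrix.cons_val_one, Matrix.head_cons, Matrix.cons_val_two,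
      Matrix.tail_cons, map_add, map_sub, map_smul, map_neg]
    try match_scalars <;> field_simp <;> ring
  have k2_1 : (T' ∘ₗ T) (bW (Sum.inl 1)) = bW ((Sum.inl 1)) := by
    simp only [LinearMap.comp_apply, LinearMap.id_apply, hT, hT', Module.Basis.constr_basis,
      hdvec, hcvec, Sum.elim_inl, Sum.elim_inr,
      Matrix.cons_val_zero, Matrix.cons_val_one, Matrix.head_cons, Matrix.cons_val_two,
      Matrix.tail_cons, map_add, map_sub, map_smul, map_neg]
    try match_scalars <;> field_simp <;> ring
  have k1_2 : (T ∘ₗ T') (bW (Sum.inl 2)) = bW ((Sum.inl 2)) := by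
    simp only [LinearMap.comp_apply, LinearMap.id_apply, hT, hT', Module.Basis.constr_basis,
      hdvec, hcvec, Sum.elim_inl, Sum.elim_inr,
      Matrix.cons_val_zero, Matrix.cons_val_one, Matrix.head_cons, Matrix.cons_val_two,
      Matrix.tail_cons, map_add, map_sub, map_smul, map_neg]
    try match_scalars <;> field_simp <;> ring
  have k2_2 : (T' ∘ₗ T) (bW (Sum.inl 2)) = bW ((Sum.inl 2)) := by
    simp only [LinearMap.comp_apply, LinearMap.id_apply, hT, hT', Module.Basis.constr_basis,
      hdvec, hcvec, Sum.elim_inl, Sum.elim_inr,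
      Matrix.cons_val_zero, Matrix.cons_val_one, Matrix.head_cons, Matrix.cons_val_two,
      Matrix.tail_cons, map_add, map_sub, map_smul, map_neg]
    try match_scalars <;> field_simp <;> ring
  have k1_3 : (T ∘ₗ T') (bW (Sum.inr (Sum.inl 0))) = bW ((Sum.inr (Sum.inl 0))) := by
    simp only [LinearMap.comp_apply, LinearMap.id_apply, hT, hT', Module.Basis.constr_basis,
      hdvec, hcvec, Sum.elim_inl, Sum.elim_inr,
      Matrix.cons_val_zero, Matrix.cons_val_one, Matrix.head_cons, Matrix.cons_val_two,
      Matrix.tail_cons, map_add, map_sub, map_smul, map_neg]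
    try match_scalars <;> field_simp <;> ring
  have k2_3 : (T' ∘ₗ T) (bW (Sum.inr (Sum.inl 0))) = bW ((Sum.inr (Sum.inl 0))) := by
    simp only [LinearMap.comp_apply, LinearMap.id_apply, hT, hT', Module.Basis.constr_basis,
      hdvec, hcvec, Sum.elim_inl, Sum.elim_inr,
      Matrix.cons_val_zero, Matrix.cons_val_one, Matrix.head_cons, Matrix.cons_val_two,
      Matrix.tail_cons, map_add, map_sub, map_smul, map_neg]
    try match_scalars <;> field_simp <;> ring
  have k1_4 : (T ∘ₗ T') (bW (Sum.inr (Sum.inr (Sum.inl 0)))) = bW ((Sum.inr (Sum.inr (Sum.inl 0)))) := by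
    simp only [LinearMap.comp_apply, LinearMap.id_apply, hT, hT', Module.Basis.constr_basis,
      hdvec, hcvec, Sum.elim_inl, Sum.elim_inr,
      Matrix.cons_val_zero, Matrix.cons_val_one, Matrix.head_cons, Matrix.cons_val_two,
      Matrix.tail_cons, map_add, map_sub, map_smul, map_neg]
    try match_scalars <;> field_simp <;> ring
  have k2_4 : (T' ∘ₗ T) (bW (Sum.inr (Sum.inr (Sum.inl 0)))) = bW ((Sum.inr (Sum.inr (Sum.inl 0)))) := by
    simp only [LinearMap.comp_apply, LinearMap.id_apply, hT, hT', Module.Basis.constr_basis,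
      hdvec, hcvec, Sum.elim_inl, Sum.elim_inr,
      Matrix.cons_val_zero, Matrix.cons_val_one, Matrix.head_cons, Matrix.cons_val_two,
      Matrix.tail_cons, map_add, map_sub, map_smul, map_neg]
    try match_scalars <;> field_simp <;> ring
  have k1_5 : (T ∘ₗ T') (bW (Sum.inr (Sum.inr (Sum.inr 0)))) = bW ((Sum.inr (Sum.inr (Sum.inr 0)))) := by
    simp only [LinearMap.comp_apply, LinearMap.id_apply, hT, hT', Module.Basis.constr_basis,
      hdvec, hcvec, Sum.elim_inl, Sum.elim_inr,
      Matrix.cons_val_zero, Matrix.cons_val_one, Matrix.head_cons, Matrix.cons_val_two,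
      Matrix.tail_cons, map_add, map_sub, map_smul, map_neg]
    try match_scalars <;> field_simp <;> ring
  have k2_5 : (T' ∘ₗ T) (bW (Sum.inr (Sum.inr (Sum.inr 0)))) = bW ((Sum.inr (Sum.inr (Sum.inr 0)))) := by
    simp only [LinearMap.comp_apply, LinearMap.id_apply, hT, hT', Module.Basis.constr_basis,
      hdvec, hcvec, Sum.elim_inl, Sum.elim_inr,
      Matrix.cons_val_zero, Matrix.cons_val_one, Matrix.head_cons, Matrix.cons_val_two,
      Matrix.tail_cons, map_add, map_sub, map_smul, map_neg]
    try match_scalars <;> field_simp <;> ring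
  have h1 : T ∘ₗ T' = LinearMap.id := by
    apply bW.ext; intro s
    rcases s with s | s | s
    · fin_cases s
      · exact k1_0
      · exact k1_1
      · exact k1_2
    · fin_cases s; exact k1_3
    · rcases s with s | s
      · fin_cases s; exact k1_4
      · fin_cases s; exact k1_5
  have h2 : T' ∘ₗ T = LinearMap.id := by
    apply bW.ext; intro s
    rcases s with s | s | s
    · fin_cases s
      · exact k2_0
      · exact k2_1
      · exact k2_2
    · fin_cases s; exact k2_3
    · rcases s with s | s
      · fin_cases s; exact k2_4
      · fin_cases s; exact k2_5
  set C : Module.Basis (Fin 3 ⊕ (Fin 1 ⊕ (Fin 1 ⊕ Fin 1))) ℂ (⋀[ℂ]^2 V) :=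
    bW.map (LinearEquiv.ofLinear T T' h1 h2) with hCdef
  have hC : ∀ s, C s = cvec s := by
    intro s
    rw [hCdef, Module.Basis.map_apply, LinearEquiv.ofLinear_apply, hT, Module.Basis.constr_basis]
  refine ⟨C, ?_⟩
  have hgC0 : g (C (Sum.inl 0)) = C (Sum.inl 0) := by
    simp only [hC]
    simp only [hcvec, Sum.elim_inl, Sum.elim_inr, Matrix.cons_val_zero, Matrix.cons_val_one,
      Matrix.head_cons, Matrix.cons_val_two, Matrix.tail_cons, map_add, map_sub, map_smul,
      hb0, hb1, hb2, hb3, hb4, hb5, gw13, gw14, gw23, gw24, gw12, gw34]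
    try match_scalars <;> field_simp <;> ring
  have hgC1 : g (C (Sum.inl 1)) = C (Sum.inl 0) + C (Sum.inl 1) := by
    simp only [hC]
    simp only [hcvec, Sum.elim_inl, Sum.elim_inr, Matrix.cons_val_zero, Matrix.cons_val_one,
      Matrix.head_cons, Matrix.cons_val_two, Matrix.tail_cons, map_add, map_sub, map_smul,
      hb0, hb1, hb2, hb3, hb4, hb5, gw13, gw14, gw23, gw24, gw12, gw34]
    try match_scalars <;> field_simp <;> ring
  have hgC2 : g (C (Sum.inl 2)) = C (Sum.inl 1) + C (Sum.inl 2) := by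
    simp only [hC]
    simp only [hcvec, Sum.elim_inl, Sum.elim_inr, Matrix.cons_val_zero, Matrix.cons_val_one,
      Matrix.head_cons, Matrix.cons_val_two, Matrix.tail_cons, map_add, map_sub, map_smul,
      hb0, hb1, hb2, hb3, hb4, hb5, gw13, gw14, gw23, gw24, gw12, gw34]
    try match_scalars <;> field_simp <;> ring
  have hgC3 : g (C (Sum.inr (Sum.inl 0))) = C (Sum.inr (Sum.inl 0)) := by
    simp only [hC]
    simp only [hcvec, Sum.elim_inl, Sum.elim_inr, Matrix.cons_val_zero, Matrix.cons_val_one,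
      Matrix.head_cons, Matrix.cons_val_two, Matrix.tail_cons, map_add, map_sub, map_smul,
      hb0, hb1, hb2, hb3, hb4, hb5, gw13, gw14, gw23, gw24, gw12, gw34]
    try match_scalars <;> field_simp <;> ring
  have hgC4 : g (C (Sum.inr (Sum.inr (Sum.inl 0))))
      = (x ^ 2) • C (Sum.inr (Sum.inr (Sum.inl 0))) := by
    simp only [hC]
    simp only [hcvec, Sum.elim_inl, Sum.elim_inr, Matrix.cons_val_zero, Matrix.cons_val_one,
      Matrix.head_cons, Matrix.cons_val_two, Matrix.tail_cons, map_add, map_sub, map_smul,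
      hb0, hb1, hb2, hb3, hb4, hb5, gw13, gw14, gw23, gw24, gw12, gw34]
    try match_scalars <;> field_simp <;> ring
  have hgC5 : g (C (Sum.inr (Sum.inr (Sum.inr 0))))
      = (x ^ 2)⁻¹ • C (Sum.inr (Sum.inr (Sum.inr 0))) := by
    simp only [hC]
    simp only [hcvec, Sum.elim_inl, Sum.elim_inr, Matrix.cons_val_zero, Matrix.cons_val_one,
      Matrix.head_cons, Matrix.cons_val_two, Matrix.tail_cons, map_add, map_sub, map_smul,
      hb0, hb1, hb2, hb3, hb4, hb5, gw13, gw14, gw23, gw24, gw12, gw34]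
    try match_scalars <;> field_simp <;> ring
  ext s t
  rw [LinearMap.toMatrix_apply]
  rcases t with t | t | t <;> fin_cases t <;>
    simp only [Fin.zero_eta, Fin.mk_one, Fin.reduceFinMk]
  · rw [hgC0]
    rcases s with s | s | s <;> fin_cases s <;>
      simp [Module.Basis.repr_self, Finsupp.single_apply, jordanBlock, Matrix.fromBlocks]
  · rw [hgC1, map_add]
    rcases s with s | s | s <;> fin_cases s <;>
      simp [Module.Basis.repr_self, Finsupp.single_apply, jordanBlock, Matrix.fromBlocks]
  · rw [hgC2, map_add]
    rcases s with s | s | s <;> fin_cases s <;>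
      simp [Module.Basis.repr_self, Finsupp.single_apply, jordanBlock, Matrix.fromBlocks]
  · rw [hgC3]
    rcases s with s | s | s <;> fin_cases s <;>
      simp [Module.Basis.repr_self, Finsupp.single_apply, jordanBlock, Matrix.fromBlocks]
  · rw [hgC4, map_smul]
    rcases s with s | s | s <;> fin_cases s <;>
      simp [Module.Basis.repr_self, Finsupp.single_apply, jordanBlock, Matrix.fromBlocks]
  · rw [hgC5, map_smul]
    rcases s with s | s | s <;> fin_cases s <;>
      simp [Module.Basis.repr_self, Finsupp.single_apply, jordanBlock, Matrix.fromBlocks]
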